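/- The boost order of a tensor with respect to a null direction ℓ is unchanged by frame transformations preserving that null direction: let T be a rank-r tensor on ℝ⁴, let ℓ be the covector with components (0,1,0,0), and let Λ be an η-orthogonal matrix whose induced action on covectors sends ℓ to c·ℓ for some c ≠ 0 (equivalently Λ_{2a} = c·δ_{a2} for all a). Then the boost order of Λ·T equals the boost order of T; in particular, it is invariant under boosts, spatial rotations, and null rotations about ℓ. -/
import Mathlib


open Matrix Classical

/-- The null-frame Minkowski metric on `ℝ⁴` as a matrix (indices 0,1,2,3 for 1,2,3,4). -/
noncomputable def etaM : Matrix (Fin 4) (Fin 4) ℝ :=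
  Matrix.of fun a b =>
    if (a = 0 ∧ b = 1) ∨ (a = 1 ∧ b = 0) then -1
    else if (a = 2 ∧ b = 2) ∨ (a = 3 ∧ b = 3) then 1 else 0

/-- The boost weight of a rank-`r` component index: the number of indices equal to 1 (here 0)
minus the number of indices equal to 2 (here 1). -/
def bw {r : ℕ} (a : Fin r → Fin 4) : ℤ :=
  ((Finset.univ.filter fun i => a i = 0).card : ℤ) -
    ((Finset.univ.filter fun i => a i = 1).card : ℤ)

/-- The boost order of a tensor: the maximum boost weight over nonzero components
(`⊥` for the zero tensor). -/
noncomputable def boostOrder {r : ℕ} (T : (Fin r → Fin 4) → ℝ) : WithBot ℤ :=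
  (Finset.univ.filter fun a => T a ≠ 0).sup fun a => ((bw a : ℤ) : WithBot ℤ)

/-- Action of a frame-transformation matrix on a rank-`r` tensor. -/
noncomputable def act {r : ℕ} (Λ : Matrix (Fin 4) (Fin 4) ℝ) (T : (Fin r → Fin 4) → ℝ) :
    (Fin r → Fin 4) → ℝ :=
  fun a => ∑ b : Fin r → Fin 4, (∏ i, Λ (b i) (a i)) * T b

/-- weight of a single index -/
def wt : Fin 4 → ℤ := ![1, -1, 0, 0]

lemma bw_eq {r : ℕ} (a : Fin r → Fin 4) : bw a = ∑ i, wt (a i) := by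
  unfold bw
  rw [Finset.card_filter, Finset.card_filter]
  push_cast
  rw [← Finset.sum_sub_distrib]
  refine Finset.sum_congr rfl fun i _ => ?_
  have : ∀ x : Fin 4, ((if x = 0 then (1:ℤ) else 0) - (if x = 1 then 1 else 0)) = wt x := by
    decide
  exact this (a i)

lemma key {Λ : Matrix (Fin 4) (Fin 4) ℝ}
    (h0 : ∀ b : Fin 4, b ≠ 0 → Λ b 0 = 0) (h1 : ∀ a : Fin 4, a ≠ 1 → Λ 1 a = 0)
    {x y : Fin 4} (h : Λ y x ≠ 0) : wt x ≤ wt y := by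
  fin_cases x <;> fin_cases y <;>
    first
      | exact absurd (h0 _ (by decide)) h
      | exact absurd (h1 _ (by decide)) h
      | decide

lemma boostOrder_le {r : ℕ} {Λ : Matrix (Fin 4) (Fin 4) ℝ}
    (h0 : ∀ b : Fin 4, b ≠ 0 → Λ b 0 = 0) (h1 : ∀ a : Fin 4, a ≠ 1 → Λ 1 a = 0)
    (T : (Fin r → Fin 4) → ℝ) : boostOrder (act Λ T) ≤ boostOrder T := by
  apply Finset.sup_le
  intro a ha
  rw [Finset.mem_filter] at ha
  obtain ⟨b, -, hb⟩ := Finset.exists_ne_zero_of_sum_ne_zero ha.2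
  have hTb : T b ≠ 0 := right_ne_zero_of_mul hb
  have hprod : (∏ i, Λ (b i) (a i)) ≠ 0 := left_ne_zero_of_mul hb
  have hle : bw a ≤ bw b := by
    rw [bw_eq, bw_eq]
    refine Finset.sum_le_sum fun i _ => ?_
    exact key h0 h1 (Finset.prod_ne_zero_iff.1 hprod i (Finset.mem_univ i))
  calc ((bw a : ℤ) : WithBot ℤ) ≤ ((bw b : ℤ) : WithBot ℤ) := by exact_mod_cast hle
    _ ≤ boostOrder T := by
        unfold boostOrder
        exact Finset.le_sup (f := fun a => ((bw a : ℤ) : WithBot ℤ)) (Finset.mem_filter.2 ⟨Finset.mem_univ b, hTb⟩)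

lemma act_act {r : ℕ} (Λ M : Matrix (Fin 4) (Fin 4) ℝ) (T : (Fin r → Fin 4) → ℝ) :
    act M (act Λ T) = act (Λ * M) T := by
  funext a
  unfold act
  simp only [Finset.mul_sum, Finset.sum_mul]
  rw [Finset.sum_comm]
  refine Finset.sum_congr rfl fun d _ => ?_
  have : (∑ b : Fin r → Fin 4, ∏ i, (Λ (d i) (b i) * M (b i) (a i)))
      = ∏ i, ∑ x : Fin 4, Λ (d i) x * M x (a i) := by
    rw [Finset.prod_univ_sum]
    simp [Fintype.piFinset_univ]
  calc (∑ b : Fin r → Fin 4, (∏ i, M (b i) (a i)) * ((∏ i, Λ (d i) (b i)) * T d))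
      = (∑ b : Fin r → Fin 4, ∏ i, (Λ (d i) (b i) * M (b i) (a i))) * T d := by
        rw [Finset.sum_mul]
        refine Finset.sum_congr rfl fun b _ => ?_
        rw [Finset.prod_mul_distrib]; ring
    _ = (∏ i, (Λ * M) (d i) (a i)) * T d := by
        rw [this]
        simp [Matrix.mul_apply]

lemma act_one {r : ℕ} (T : (Fin r → Fin 4) → ℝ) : act 1 T = T := by
  funext a
  unfold act
  rw [Finset.sum_eq_single a]
  · simp [Matrix.one_apply]
  · intro b _ hba
    obtain ⟨i, hi⟩ := Function.ne_iff.1 hba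
    have hz : (1 : Matrix (Fin 4) (Fin 4) ℝ) (b i) (a i) = 0 := Matrix.one_apply_ne hi
    rw [Finset.prod_eq_zero (Finset.mem_univ i) hz, zero_mul]
  · intro h; exact absurd (Finset.mem_univ a) h

/-- the boost order of a nonzero tensor with respect to the null direction
`ℓ = (0,1,0,0)` is invariant under `η`-orthogonal transformations whose induced action on
covectors sends `ℓ` to `c·ℓ` with `c ≠ 0` (boosts, spatial rotations and null rotations
about `ℓ`). -/
theorem boostOrder_invariant {r : ℕ} (T : (Fin r → Fin 4) → ℝ) (hT : T ≠ 0)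
    (Λ : Matrix (Fin 4) (Fin 4) ℝ) (hΛ : Λᵀ * etaM * Λ = etaM)
    (c : ℝ) (hc : c ≠ 0) (hrow : ∀ a : Fin 4, Λ 1 a = c * (if a = 1 then 1 else 0)) :
    boostOrder (act Λ T) = boostOrder T := by
  have heta2 : etaM * etaM = 1 := by
    ext i j
    fin_cases i <;> fin_cases j <;>
      simp [etaM, Matrix.mul_apply, Fin.sum_univ_four, Matrix.one_apply]
  have hentry : ∀ i j, (Λᵀ * etaM * Λ) i j = etaM i j := fun i j => by rw [hΛ]
  have h10 : Λ 1 0 = 0 := by simpa using hrow 0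
  have h00 : Λ 2 0 * Λ 2 0 + Λ 3 0 * Λ 3 0 = 0 := by
    have := hentry 0 0
    simp [etaM, Matrix.mul_apply, Fin.sum_univ_four, Matrix.transpose_apply, h10] at this
    linarith [this]
  have h20 : Λ 2 0 = 0 := by nlinarith [sq_nonneg (Λ 2 0), sq_nonneg (Λ 3 0)]
  have h30 : Λ 3 0 = 0 := by nlinarith [sq_nonneg (Λ 2 0), sq_nonneg (Λ 3 0)]
  have hcol0 : ∀ b : Fin 4, b ≠ 0 → Λ b 0 = 0 := by
    intro b hb; fin_cases b
    · exact absurd rfl hb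
    · exact h10
    · exact h20
    · exact h30
  have hrow1 : ∀ a : Fin 4, a ≠ 1 → Λ 1 a = 0 := by
    intro a ha; rw [hrow a, if_neg ha, mul_zero]
  -- the inverse matrix
  set M : Matrix (Fin 4) (Fin 4) ℝ := etaM * Λᵀ * etaM with hM
  have hMΛ : M * Λ = 1 := by
    rw [hM]
    calc etaM * Λᵀ * etaM * Λ = etaM * (Λᵀ * etaM * Λ) := by
          simp [Matrix.mul_assoc]
      _ = 1 := by rw [hΛ, heta2]
  have hΛM : Λ * M = 1 := mul_eq_one_comm.1 hMΛ
  have hMcol0 : ∀ b : Fin 4, b ≠ 0 → M b 0 = 0 := by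
    intro b hb
    fin_cases b
    · exact absurd rfl hb
    all_goals
      simp [hM, etaM, Matrix.mul_apply, Fin.sum_univ_four, Matrix.transpose_apply, hrow]
  have hMrow1 : ∀ a : Fin 4, a ≠ 1 → M 1 a = 0 := by
    intro a ha
    fin_cases a
    · simp [hM, etaM, Matrix.mul_apply, Fin.sum_univ_four, Matrix.transpose_apply, h10, h20, h30]
    · exact absurd rfl ha
    all_goals
      simp [hM, etaM, Matrix.mul_apply, Fin.sum_univ_four, Matrix.transpose_apply, h10, h20, h30]
  have hTeq : act M (act Λ T) = T := by rw [act_act, hΛM, act_one]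
  refine le_antisymm (boostOrder_le hcol0 hrow1 T) ?_
  calc boostOrder T = boostOrder (act M (act Λ T)) := by rw [hTeq]
    _ ≤ boostOrder (act Λ T) := boostOrder_le hMcol0 hMrow1 _
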